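/- For all n ≥ 3, ∑_{k=0}^{⌊n/2⌋} (binom(k+1, n−2k) + binom(k, n−2k−1)) equals the (1,3,3)-Padovan number p(n−2), where p(0)=1, p(1)=3, p(2)=3, and p(n)=p(n−2)+p(n−3). -/
import Mathlib
open Finset

def binom (a b : ℤ) : ℤ := if 0 ≤ b ∧ b ≤ a then Nat.choose a.toNat b.toNat else 0

def p : ℕ → ℤ
  | 0 => 1
  | 1 => 3
  | 2 => 3
  | (n + 3) => p (n + 1) + p n

lemma binom_neg {a b : ℤ} (hb : b < 0) : binom a b = 0 := by
  simp [binom]; omega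

lemma binom_pascal (a b : ℤ) (ha : 0 ≤ a) :
    binom (a + 1) b = binom a b + binom a (b - 1) := by
  unfold binom
  split_ifs with h1 h2 h3 h2 h3 h3
  · rw [show (a+1).toNat = a.toNat + 1 by omega, show b.toNat = (b-1).toNat + 1 by omega,
      Nat.choose_succ_succ]
    push_cast; ring
  · simp [show b.toNat = 0 by omega]
  · rw [show b.toNat = (a+1).toNat by omega, show (b-1).toNat = a.toNat by omega,
      show (a+1).toNat = a.toNat + 1 by omega, Nat.choose_self, Nat.choose_self]
    simp
  all_goals omega

lemma binom_pascal' (j : ℕ) (b c d : ℤ) (hc : c = b) (hd : d = b - 1) :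
    binom ((j : ℤ) + 1) b = binom (j : ℤ) c + binom (j : ℤ) d := by
  subst hc hd; exact binom_pascal _ _ (by positivity)

def T (m : ℕ) : ℤ := ∑ k ∈ range (m + 1), binom (k : ℤ) ((m : ℤ) - 2 * k)

lemma sum_binom_range (m : ℤ) {A B : ℕ} (hA : m < 2 * A) (hB : A ≤ B) :
    ∑ k ∈ range B, binom (k : ℤ) (m - 2 * k) = ∑ k ∈ range A, binom (k : ℤ) (m - 2 * k) := by
  symm
  apply Finset.sum_subset (by simpa using hB)
  intro x hx hx'
  simp only [mem_range] at hx hx'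
  exact binom_neg (by omega)

lemma sum_eq_T (m : ℕ) {B : ℕ} (hB : (m : ℤ) < 2 * B) :
    ∑ k ∈ range B, binom (k : ℤ) ((m : ℤ) - 2 * k) = T m := by
  by_cases h : B ≤ m + 1
  · rw [T, ← sum_binom_range ((m:ℤ)) hB h]
  · rw [T, sum_binom_range ((m:ℤ)) (A := m + 1) (by push_cast; omega) (by omega)]

lemma T_rec (m : ℕ) : T (m + 3) = T (m + 1) + T m := by
  rw [T, Finset.sum_range_succ']
  have h0 : binom (((0:ℕ)):ℤ) ((↑(m+3):ℤ) - 2 * ((0:ℕ):ℤ)) = 0 := by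
    simp [binom]; omega
  rw [h0, add_zero]
  have step : ∀ j ∈ range (m + 3), binom ((↑(j+1)):ℤ) ((↑(m+3):ℤ) - 2 * (↑(j+1):ℤ)) =
      binom (j : ℤ) ((↑(m+1):ℤ) - 2 * j) + binom (j : ℤ) ((m:ℤ) - 2 * j) := by
    intro j _
    push_cast
    exact binom_pascal' j _ _ _ (by ring) (by ring)
  rw [Finset.sum_congr rfl step, Finset.sum_add_distrib,
    sum_eq_T (m+1) (by push_cast; omega), sum_eq_T m (by push_cast; omega)]

lemma key : ∀ n, T (n + 4) + T (n + 1) = p n := by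
  have T1 : T 1 = 0 := by decide
  have T2 : T 2 = 1 := by decide
  have T3 : T 3 = 1 := by decide
  have T4 : T 4 = 1 := by decide
  have T5 : T 5 = 2 := by decide
  have T6 : T 6 = 2 := by decide
  have main : ∀ n, (T (n + 4) + T (n + 1) = p n) ∧ (T (n + 5) + T (n + 2) = p (n + 1))
      ∧ (T (n + 6) + T (n + 3) = p (n + 2)) := by
    intro n
    induction n with
    | zero =>
      refine ⟨by rw [T4, T1]; rfl, by rw [T5, T2]; rfl, by rw [T6, T3]; rfl⟩
    | succ k ih =>
      refine ⟨ih.2.1, ih.2.2, ?_⟩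
      have h1 : T (k + 7) = T (k + 5) + T (k + 4) := T_rec (k + 4)
      have h2 : T (k + 4) = T (k + 2) + T (k + 1) := T_rec (k + 1)
      have hp : p (k + 3) = p (k + 1) + p k := rfl
      have e1 := ih.1
      have e2 := ih.2.1
      show T (k + 7) + T (k + 4) = p (k + 3)
      rw [hp]; linarith
  exact fun n => (main n).1

theorem sum_binom_eq_padovan (n : ℕ) (hn : 3 ≤ n) :
    ∑ k ∈ range (n / 2 + 1),
      (binom ((k : ℤ) + 1) ((n : ℤ) - 2 * k) + binom (k : ℤ) ((n : ℤ) - 2 * k - 1)) = p (n - 2) := by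
  obtain ⟨m, rfl⟩ : ∃ m, n = m + 3 := ⟨n - 3, by omega⟩
  rw [Finset.sum_add_distrib, show m + 3 - 2 = m + 1 from by omega]
  have hA : ∑ k ∈ range ((m + 3) / 2 + 1), binom ((k : ℤ) + 1) ((↑(m + 3) : ℤ) - 2 * k)
      = T (m + 5) := by
    have h := Finset.sum_range_succ'
      (fun j : ℕ => binom (j : ℤ) ((↑(m + 5) : ℤ) - 2 * j)) ((m + 3) / 2 + 1)
    rw [sum_eq_T (m + 5) (by push_cast; omega)] at h
    have h0 : binom (((0:ℕ)) : ℤ) ((↑(m + 5) : ℤ) - 2 * ((0:ℕ) : ℤ)) = 0 := by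
      simp [binom]; omega
    rw [h0, add_zero] at h
    rw [h]
    refine Finset.sum_congr rfl fun k _ => ?_
    congr 1
    all_goals push_cast; ring
  have hB : ∑ k ∈ range ((m + 3) / 2 + 1), binom (k : ℤ) ((↑(m + 3) : ℤ) - 2 * k - 1)
      = T (m + 2) := by
    rw [← sum_eq_T (m + 2) (B := (m + 3) / 2 + 1) (by push_cast; omega)]
    refine Finset.sum_congr rfl fun k _ => ?_
    congr 1
    push_cast; ring
  rw [hA, hB]
  exact key (m + 1)
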